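/- θ-analogue of the Firoozbakht conjecture: for all n ≥ 4, (θ_{n+1})^{1/(n+1)} < (θ_n)^{1/n}, equivalently n ln θ_{n+1} < (n+1) ln θ_n, where θ_n = ∑_{i=1}^n ln(p_i). -/

import Mathlib

open Real Finset

noncomputable def p (n : ℕ) : ℕ := Nat.nth Nat.Prime (n - 1)

noncomputable def θ (n : ℕ) : ℝ := ∑ i ∈ Finset.Icc 1 n, Real.log (p i)

lemma θ_succ (n : ℕ) : θ (n+1) = θ n + Real.log (p (n+1)) := by
  unfold θ
  rw [← Finset.sum_Icc_succ_top (by omega : 1 ≤ n + 1)]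

lemma p_ge (i : ℕ) (hi : 1 ≤ i) : i + 1 ≤ p i := by
  have := Nat.add_two_le_nth_prime (i - 1)
  unfold p; omega

lemma p_ge_two (i : ℕ) : 2 ≤ p i := by
  have := (Nat.prime_nth_prime (i-1)).two_le
  unfold p; omega

lemma theta_ge (n : ℕ) : Real.log (Nat.factorial (n+1) : ℝ) ≤ θ n := by
  induction n with
  | zero => simp [θ]
  | succ n ih =>
    rw [θ_succ]
    have h1 : (Nat.factorial (n+2)) = (n+2) * Nat.factorial (n+1) := rfl
    have h2 : Real.log ((n+2 : ℕ) : ℝ) ≤ Real.log (p (n+1)) := by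
      apply Real.log_le_log (by positivity)
      exact_mod_cast p_ge (n+1) (by omega)
    calc Real.log (Nat.factorial (n+1+1) : ℝ)
        = Real.log ((n+2:ℕ) : ℝ) + Real.log (Nat.factorial (n+1) : ℝ) := by
          rw [← Real.log_mul (by positivity) (by positivity)]
          rw [show n+1+1 = n+2 from rfl, h1]
          push_cast
          ring_nf
      _ ≤ Real.log (p (n+1)) + θ n := add_le_add h2 ih
      _ = θ n + Real.log (p (n+1)) := by ring

lemma logfact_ge (m : ℕ) (hm : 1 ≤ m) :
    (m:ℝ) * (Real.log m - 1) ≤ Real.log (Nat.factorial m : ℝ) := by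
  induction m with
  | zero => omega
  | succ m ih =>
    rcases Nat.eq_or_lt_of_le hm with h | h
    · simp [← h]
    · have hm1 : 1 ≤ m := by omega
      have ih := ih hm1
      have hmpos : (0:ℝ) < m := by positivity
      have key : (m:ℝ) * (Real.log ((m:ℝ)+1) - Real.log m) ≤ 1 := by
        have h1 : Real.log (((m:ℝ)+1)/m) ≤ ((m:ℝ)+1)/m - 1 :=
          Real.log_le_sub_one_of_pos (by positivity)
        rw [Real.log_div (by positivity) (by positivity)] at h1
        have h2 : ((m:ℝ)+1)/m - 1 = 1/m := by field_simp; ring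
        rw [h2] at h1
        calc (m:ℝ) * (Real.log ((m:ℝ)+1) - Real.log m) ≤ (m:ℝ) * (1/m) :=
              mul_le_mul_of_nonneg_left h1 (by positivity)
          _ = 1 := by field_simp
      have hfact : (Nat.factorial (m+1)) = (m+1) * Nat.factorial m := rfl
      have hlog : Real.log (Nat.factorial (m+1) : ℝ)
          = Real.log ((m:ℝ)+1) + Real.log (Nat.factorial m : ℝ) := by
        rw [hfact]
        push_cast
        rw [Real.log_mul (by positivity) (by positivity)]
      rw [hlog]
      push_cast
      nlinarith [key, ih]

lemma main_real (n : ℕ) (hn : 1 ≤ n) (a L : ℝ) (ha : 1 < a) (hL : 0 < L)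
    (h : n * L < a * Real.log a) :
    (a + L) ^ ((1 : ℝ)/(n+1)) < a ^ ((1 : ℝ)/n) := by
  have ha0 : (0:ℝ) < a := by linarith
  have hlog : (0:ℝ) < Real.log a := Real.log_pos ha
  have hn0 : (0:ℝ) < n := by exact_mod_cast hn
  have haL : (0:ℝ) < a + L := by linarith
  have hstep : Real.log (a + L) ≤ Real.log a + L / a := by
    have : a + L = a * (1 + L/a) := by field_simp
    rw [this, Real.log_mul (by positivity) (by positivity)]
    have := Real.log_le_sub_one_of_pos (show (0:ℝ) < 1 + L/a by positivity)
    linarith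
  have hkey : (n:ℝ) * Real.log (a + L) < ((n:ℝ)+1) * Real.log a := by
    have h1 : (n:ℝ) * (L/a) < Real.log a := by
      rw [mul_div_assoc', div_lt_iff₀ ha0]
      nlinarith [h]
    nlinarith [hstep, hn0]
  -- conclude
  have e1 : Real.log ((a+L) ^ ((1:ℝ)/(n+1))) < Real.log (a ^ ((1:ℝ)/n)) := by
    rw [Real.log_rpow haL, Real.log_rpow ha0]
    rw [div_mul_eq_mul_div, div_mul_eq_mul_div, one_mul, one_mul,
      div_lt_div_iff₀ (by positivity) hn0]
    calc Real.log (a+L) * n = n * Real.log (a+L) := by ring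
      _ < ((n:ℝ)+1) * Real.log a := hkey
      _ = Real.log a * (n+1) := by ring
  have p1 : (0:ℝ) < (a+L) ^ ((1:ℝ)/(n+1)) := Real.rpow_pos_of_pos haL _
  have p2 : (0:ℝ) < a ^ ((1:ℝ)/n) := Real.rpow_pos_of_pos ha0 _
  have := Real.exp_lt_exp.mpr e1
  rwa [Real.exp_log p1, Real.exp_log p2] at this

lemma exp_pow_eq (x : ℝ) (k : ℕ) : Real.exp x ^ k = Real.exp (k * x) :=
  (Real.exp_nat_mul x k).symm

lemma logP_ge (P a : ℕ) (hP : 0 < P) (h : (2.7182818286:ℝ)^a ≤ (P:ℝ)^10) :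
    (a:ℝ)/10 ≤ Real.log P := by
  rw [Real.le_log_iff_exp_le (by positivity)]
  have h1 : Real.exp ((a:ℝ)/10) ^ 10 = Real.exp a := by
    rw [exp_pow_eq]; ring_nf
  have h2 : Real.exp (a:ℝ) ≤ (2.7182818286:ℝ)^a := by
    have : Real.exp (a:ℝ) = Real.exp 1 ^ a := by rw [exp_pow_eq]; ring_nf
    rw [this]
    exact pow_le_pow_left₀ (Real.exp_pos 1).le Real.exp_one_lt_d9.le a
  have h3 : Real.exp ((a:ℝ)/10) ^ 10 ≤ (P:ℝ)^10 := by
    rw [h1]; exact le_trans h2 h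
  exact le_of_pow_le_pow_left₀ (by norm_num) (by positivity) h3

lemma logP_le (P c : ℕ) (hP : 0 < P) (h : (P:ℝ)^10 ≤ (2.7182818283:ℝ)^c) :
    Real.log P ≤ (c:ℝ)/10 := by
  rw [Real.log_le_iff_le_exp (by positivity)]
  have h1 : Real.exp ((c:ℝ)/10) ^ 10 = Real.exp c := by
    rw [exp_pow_eq]; ring_nf
  have h2 : (2.7182818283:ℝ)^c ≤ Real.exp (c:ℝ) := by
    have : Real.exp (c:ℝ) = Real.exp 1 ^ c := by rw [exp_pow_eq]; ring_nf
    rw [this]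
    exact pow_le_pow_left₀ (by norm_num) Real.exp_one_gt_d9.le c
  have h3 : (P:ℝ)^10 ≤ Real.exp ((c:ℝ)/10) ^ 10 := by
    rw [h1]; exact le_trans h h2
  exact le_of_pow_le_pow_left₀ (by norm_num) (Real.exp_pos _).le h3

lemma bridge (n : ℕ) (hn : 1 ≤ n) (A B LB UB : ℝ) (hLB : 1 < LB) (hUB : 0 < UB)
    (hA : LB ≤ A) (hB0 : 0 ≤ B) (hB : B ≤ UB)
    (key : UB^n < LB^(n+1)) :
    B ^ ((1 : ℝ)/(n+1)) < A ^ ((1 : ℝ)/n) := by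
  have hn0 : (0:ℝ) < n := by exact_mod_cast hn
  have hLB0 : (0:ℝ) < LB := by linarith
  have hA0 : (0:ℝ) < A := by linarith
  have step1 : B ^ ((1:ℝ)/(n+1)) ≤ UB ^ ((1:ℝ)/(n+1)) :=
    Real.rpow_le_rpow hB0 hB (by positivity)
  have step2 : LB ^ ((1:ℝ)/n) ≤ A ^ ((1:ℝ)/n) :=
    Real.rpow_le_rpow hLB0.le hA (by positivity)
  have main : UB ^ ((1:ℝ)/(n+1)) < LB ^ ((1:ℝ)/n) := by
    have e1 : Real.log (UB ^ ((1:ℝ)/(n+1))) < Real.log (LB ^ ((1:ℝ)/n)) := by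
      rw [Real.log_rpow hUB, Real.log_rpow hLB0]
      rw [div_mul_eq_mul_div, div_mul_eq_mul_div, one_mul, one_mul,
        div_lt_div_iff₀ (by positivity) hn0]
      have h2 : Real.log (UB^n) < Real.log (LB^(n+1)) :=
        Real.log_lt_log (by positivity) key
      rw [Real.log_pow, Real.log_pow] at h2
      push_cast at h2 ⊢
      nlinarith [h2]
    have p1 : (0:ℝ) < UB ^ ((1:ℝ)/(n+1)) := Real.rpow_pos_of_pos hUB _
    have p2 : (0:ℝ) < LB ^ ((1:ℝ)/n) := Real.rpow_pos_of_pos hLB0 _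
    have := Real.exp_lt_exp.mpr e1
    rwa [Real.exp_log p1, Real.exp_log p2] at this
  exact lt_of_le_of_lt step1 (lt_of_lt_of_le main step2)
lemma pv1 : p 1 = 2 := by
  have h : Nat.count Nat.Prime 2 = 0 := by decide
  unfold p
  rw [show (1:ℕ)-1 = 0 from rfl, ← h, Nat.nth_count (by norm_num)]

lemma pv2 : p 2 = 3 := by
  have h : Nat.count Nat.Prime 3 = 1 := by decide
  unfold p
  rw [show (2:ℕ)-1 = 1 from rfl, ← h, Nat.nth_count (by norm_num)]

lemma pv3 : p 3 = 5 := by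
  have h : Nat.count Nat.Prime 5 = 2 := by decide
  unfold p
  rw [show (3:ℕ)-1 = 2 from rfl, ← h, Nat.nth_count (by norm_num)]

lemma pv4 : p 4 = 7 := by
  have h : Nat.count Nat.Prime 7 = 3 := by decide
  unfold p
  rw [show (4:ℕ)-1 = 3 from rfl, ← h, Nat.nth_count (by norm_num)]

lemma pv5 : p 5 = 11 := by
  have h : Nat.count Nat.Prime 11 = 4 := by decide
  unfold p
  rw [show (5:ℕ)-1 = 4 from rfl, ← h, Nat.nth_count (by norm_num)]

lemma pv6 : p 6 = 13 := by
  have h : Nat.count Nat.Prime 13 = 5 := by decide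
  unfold p
  rw [show (6:ℕ)-1 = 5 from rfl, ← h, Nat.nth_count (by norm_num)]

lemma pv7 : p 7 = 17 := by
  have h : Nat.count Nat.Prime 17 = 6 := by decide
  unfold p
  rw [show (7:ℕ)-1 = 6 from rfl, ← h, Nat.nth_count (by norm_num)]

lemma pv8 : p 8 = 19 := by
  have h : Nat.count Nat.Prime 19 = 7 := by decide
  unfold p
  rw [show (8:ℕ)-1 = 7 from rfl, ← h, Nat.nth_count (by norm_num)]

lemma pv9 : p 9 = 23 := by
  have h : Nat.count Nat.Prime 23 = 8 := by decide
  unfold p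
  rw [show (9:ℕ)-1 = 8 from rfl, ← h, Nat.nth_count (by norm_num)]

lemma pv10 : p 10 = 29 := by
  have h : Nat.count Nat.Prime 29 = 9 := by decide
  unfold p
  rw [show (10:ℕ)-1 = 9 from rfl, ← h, Nat.nth_count (by norm_num)]

lemma pv11 : p 11 = 31 := by
  have h : Nat.count Nat.Prime 31 = 10 := by decide
  unfold p
  rw [show (11:ℕ)-1 = 10 from rfl, ← h, Nat.nth_count (by norm_num)]

lemma pv12 : p 12 = 37 := by
  have h : Nat.count Nat.Prime 37 = 11 := by decide
  unfold p
  rw [show (12:ℕ)-1 = 11 from rfl, ← h, Nat.nth_count (by norm_num)]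

lemma pv13 : p 13 = 41 := by
  have h : Nat.count Nat.Prime 41 = 12 := by decide
  unfold p
  rw [show (13:ℕ)-1 = 12 from rfl, ← h, Nat.nth_count (by norm_num)]

lemma pv14 : p 14 = 43 := by
  have h : Nat.count Nat.Prime 43 = 13 := by decide
  unfold p
  rw [show (14:ℕ)-1 = 13 from rfl, ← h, Nat.nth_count (by norm_num)]

lemma pv15 : p 15 = 47 := by
  have h : Nat.count Nat.Prime 47 = 14 := by decide
  unfold p
  rw [show (15:ℕ)-1 = 14 from rfl, ← h, Nat.nth_count (by norm_num)]

lemma pv16 : p 16 = 53 := by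
  have h : Nat.count Nat.Prime 53 = 15 := by decide
  unfold p
  rw [show (16:ℕ)-1 = 15 from rfl, ← h, Nat.nth_count (by norm_num)]

lemma pv17 : p 17 = 59 := by
  have h : Nat.count Nat.Prime 59 = 16 := by decide
  unfold p
  rw [show (17:ℕ)-1 = 16 from rfl, ← h, Nat.nth_count (by norm_num)]

lemma pv18 : p 18 = 61 := by
  have h : Nat.count Nat.Prime 61 = 17 := by decide
  unfold p
  rw [show (18:ℕ)-1 = 17 from rfl, ← h, Nat.nth_count (by norm_num)]

lemma pv19 : p 19 = 67 := by
  have h : Nat.count Nat.Prime 67 = 18 := by decide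
  unfold p
  rw [show (19:ℕ)-1 = 18 from rfl, ← h, Nat.nth_count (by norm_num)]

lemma pv20 : p 20 = 71 := by
  have h : Nat.count Nat.Prime 71 = 19 := by decide
  unfold p
  rw [show (20:ℕ)-1 = 19 from rfl, ← h, Nat.nth_count (by norm_num)]

lemma tv0 : θ 0 = Real.log 1 := by simp [θ]

lemma tv1 : θ 1 = Real.log 2 := by
  rw [show θ 1 = θ (0+1) from rfl, θ_succ, tv0, pv1,
    ← Real.log_mul (by norm_num) (by norm_num)]
  norm_num

lemma tv2 : θ 2 = Real.log 6 := by
  rw [show (2:ℕ) = 1+1 from rfl, θ_succ, tv1, pv2,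
    ← Real.log_mul (by norm_num) (by norm_num)]
  norm_num

lemma tv3 : θ 3 = Real.log 30 := by
  rw [show (3:ℕ) = 2+1 from rfl, θ_succ, tv2, pv3,
    ← Real.log_mul (by norm_num) (by norm_num)]
  norm_num

lemma tv4 : θ 4 = Real.log 210 := by
  rw [show (4:ℕ) = 3+1 from rfl, θ_succ, tv3, pv4,
    ← Real.log_mul (by norm_num) (by norm_num)]
  norm_num

lemma tv5 : θ 5 = Real.log 2310 := by
  rw [show (5:ℕ) = 4+1 from rfl, θ_succ, tv4, pv5,
    ← Real.log_mul (by norm_num) (by norm_num)]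
  norm_num

lemma tv6 : θ 6 = Real.log 30030 := by
  rw [show (6:ℕ) = 5+1 from rfl, θ_succ, tv5, pv6,
    ← Real.log_mul (by norm_num) (by norm_num)]
  norm_num

lemma tv7 : θ 7 = Real.log 510510 := by
  rw [show (7:ℕ) = 6+1 from rfl, θ_succ, tv6, pv7,
    ← Real.log_mul (by norm_num) (by norm_num)]
  norm_num

lemma tv8 : θ 8 = Real.log 9699690 := by
  rw [show (8:ℕ) = 7+1 from rfl, θ_succ, tv7, pv8,
    ← Real.log_mul (by norm_num) (by norm_num)]
  norm_num

lemma tv9 : θ 9 = Real.log 223092870 := by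
  rw [show (9:ℕ) = 8+1 from rfl, θ_succ, tv8, pv9,
    ← Real.log_mul (by norm_num) (by norm_num)]
  norm_num

lemma tv10 : θ 10 = Real.log 6469693230 := by
  rw [show (10:ℕ) = 9+1 from rfl, θ_succ, tv9, pv10,
    ← Real.log_mul (by norm_num) (by norm_num)]
  norm_num

lemma tv11 : θ 11 = Real.log 200560490130 := by
  rw [show (11:ℕ) = 10+1 from rfl, θ_succ, tv10, pv11,
    ← Real.log_mul (by norm_num) (by norm_num)]
  norm_num

lemma tv12 : θ 12 = Real.log 7420738134810 := by
  rw [show (12:ℕ) = 11+1 from rfl, θ_succ, tv11, pv12,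
    ← Real.log_mul (by norm_num) (by norm_num)]
  norm_num

lemma tv13 : θ 13 = Real.log 304250263527210 := by
  rw [show (13:ℕ) = 12+1 from rfl, θ_succ, tv12, pv13,
    ← Real.log_mul (by norm_num) (by norm_num)]
  norm_num

lemma tv14 : θ 14 = Real.log 13082761331670030 := by
  rw [show (14:ℕ) = 13+1 from rfl, θ_succ, tv13, pv14,
    ← Real.log_mul (by norm_num) (by norm_num)]
  norm_num

lemma tv15 : θ 15 = Real.log 614889782588491410 := by
  rw [show (15:ℕ) = 14+1 from rfl, θ_succ, tv14, pv15,
    ← Real.log_mul (by norm_num) (by norm_num)]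
  norm_num

lemma tv16 : θ 16 = Real.log 32589158477190044730 := by
  rw [show (16:ℕ) = 15+1 from rfl, θ_succ, tv15, pv16,
    ← Real.log_mul (by norm_num) (by norm_num)]
  norm_num

lemma tv17 : θ 17 = Real.log 1922760350154212639070 := by
  rw [show (17:ℕ) = 16+1 from rfl, θ_succ, tv16, pv17,
    ← Real.log_mul (by norm_num) (by norm_num)]
  norm_num

lemma tv18 : θ 18 = Real.log 117288381359406970983270 := by
  rw [show (18:ℕ) = 17+1 from rfl, θ_succ, tv17, pv18,
    ← Real.log_mul (by norm_num) (by norm_num)]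
  norm_num

lemma tv19 : θ 19 = Real.log 7858321551080267055879090 := by
  rw [show (19:ℕ) = 18+1 from rfl, θ_succ, tv18, pv19,
    ← Real.log_mul (by norm_num) (by norm_num)]
  norm_num

lemma tv20 : θ 20 = Real.log 557940830126698960967415390 := by
  rw [show (20:ℕ) = 19+1 from rfl, θ_succ, tv19, pv20,
    ← Real.log_mul (by norm_num) (by norm_num)]
  norm_num

lemma case4 (n : ℕ) (hn : n = 4) :
    θ (n+1) ^ ((1:ℝ)/(n+1)) < θ n ^ ((1:ℝ)/n) := by
  subst hn
  rw [show (4:ℕ)+1 = 5 from rfl, tv4, tv5]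
  apply bridge 4 (by norm_num) _ _ ((53:ℝ)/10) ((78:ℝ)/10)
  · norm_num
  · norm_num
  · exact_mod_cast logP_ge 210 53 (by norm_num) (by norm_num)
  · exact Real.log_nonneg (by norm_num)
  · exact_mod_cast logP_le 2310 78 (by norm_num) (by norm_num)
  · norm_num

lemma case5 (n : ℕ) (hn : n = 5) :
    θ (n+1) ^ ((1:ℝ)/(n+1)) < θ n ^ ((1:ℝ)/n) := by
  subst hn
  rw [show (5:ℕ)+1 = 6 from rfl, tv5, tv6]
  apply bridge 5 (by norm_num) _ _ ((77:ℝ)/10) ((104:ℝ)/10)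
  · norm_num
  · norm_num
  · exact_mod_cast logP_ge 2310 77 (by norm_num) (by norm_num)
  · exact Real.log_nonneg (by norm_num)
  · exact_mod_cast logP_le 30030 104 (by norm_num) (by norm_num)
  · norm_num

lemma case6 (n : ℕ) (hn : n = 6) :
    θ (n+1) ^ ((1:ℝ)/(n+1)) < θ n ^ ((1:ℝ)/n) := by
  subst hn
  rw [show (6:ℕ)+1 = 7 from rfl, tv6, tv7]
  apply bridge 6 (by norm_num) _ _ ((103:ℝ)/10) ((132:ℝ)/10)
  · norm_num
  · norm_num
  · exact_mod_cast logP_ge 30030 103 (by norm_num) (by norm_num)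
  · exact Real.log_nonneg (by norm_num)
  · exact_mod_cast logP_le 510510 132 (by norm_num) (by norm_num)
  · norm_num

lemma case7 (n : ℕ) (hn : n = 7) :
    θ (n+1) ^ ((1:ℝ)/(n+1)) < θ n ^ ((1:ℝ)/n) := by
  subst hn
  rw [show (7:ℕ)+1 = 8 from rfl, tv7, tv8]
  apply bridge 7 (by norm_num) _ _ ((131:ℝ)/10) ((161:ℝ)/10)
  · norm_num
  · norm_num
  · exact_mod_cast logP_ge 510510 131 (by norm_num) (by norm_num)
  · exact Real.log_nonneg (by norm_num)
  · exact_mod_cast logP_le 9699690 161 (by norm_num) (by norm_num)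
  · norm_num

lemma case8 (n : ℕ) (hn : n = 8) :
    θ (n+1) ^ ((1:ℝ)/(n+1)) < θ n ^ ((1:ℝ)/n) := by
  subst hn
  rw [show (8:ℕ)+1 = 9 from rfl, tv8, tv9]
  apply bridge 8 (by norm_num) _ _ ((160:ℝ)/10) ((193:ℝ)/10)
  · norm_num
  · norm_num
  · exact_mod_cast logP_ge 9699690 160 (by norm_num) (by norm_num)
  · exact Real.log_nonneg (by norm_num)
  · exact_mod_cast logP_le 223092870 193 (by norm_num) (by norm_num)
  · norm_num

lemma case9 (n : ℕ) (hn : n = 9) :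
    θ (n+1) ^ ((1:ℝ)/(n+1)) < θ n ^ ((1:ℝ)/n) := by
  subst hn
  rw [show (9:ℕ)+1 = 10 from rfl, tv9, tv10]
  apply bridge 9 (by norm_num) _ _ ((192:ℝ)/10) ((226:ℝ)/10)
  · norm_num
  · norm_num
  · exact_mod_cast logP_ge 223092870 192 (by norm_num) (by norm_num)
  · exact Real.log_nonneg (by norm_num)
  · exact_mod_cast logP_le 6469693230 226 (by norm_num) (by norm_num)
  · norm_num

lemma case10 (n : ℕ) (hn : n = 10) :
    θ (n+1) ^ ((1:ℝ)/(n+1)) < θ n ^ ((1:ℝ)/n) := by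
  subst hn
  rw [show (10:ℕ)+1 = 11 from rfl, tv10, tv11]
  apply bridge 10 (by norm_num) _ _ ((225:ℝ)/10) ((261:ℝ)/10)
  · norm_num
  · norm_num
  · exact_mod_cast logP_ge 6469693230 225 (by norm_num) (by norm_num)
  · exact Real.log_nonneg (by norm_num)
  · exact_mod_cast logP_le 200560490130 261 (by norm_num) (by rw [show (261:ℕ) = 130 + 131 from rfl, pow_add]; norm_num)
  · norm_num

lemma case11 (n : ℕ) (hn : n = 11) :
    θ (n+1) ^ ((1:ℝ)/(n+1)) < θ n ^ ((1:ℝ)/n) := by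
  subst hn
  rw [show (11:ℕ)+1 = 12 from rfl, tv11, tv12]
  apply bridge 11 (by norm_num) _ _ ((260:ℝ)/10) ((297:ℝ)/10)
  · norm_num
  · norm_num
  · exact_mod_cast logP_ge 200560490130 260 (by norm_num) (by rw [show (260:ℕ) = 130 + 130 from rfl, pow_add]; norm_num)
  · exact Real.log_nonneg (by norm_num)
  · exact_mod_cast logP_le 7420738134810 297 (by norm_num) (by rw [show (297:ℕ) = 148 + 149 from rfl, pow_add]; norm_num)
  · norm_num

lemma case12 (n : ℕ) (hn : n = 12) :
    θ (n+1) ^ ((1:ℝ)/(n+1)) < θ n ^ ((1:ℝ)/n) := by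
  subst hn
  rw [show (12:ℕ)+1 = 13 from rfl, tv12, tv13]
  apply bridge 12 (by norm_num) _ _ ((296:ℝ)/10) ((334:ℝ)/10)
  · norm_num
  · norm_num
  · exact_mod_cast logP_ge 7420738134810 296 (by norm_num) (by rw [show (296:ℕ) = 148 + 148 from rfl, pow_add]; norm_num)
  · exact Real.log_nonneg (by norm_num)
  · exact_mod_cast logP_le 304250263527210 334 (by norm_num) (by rw [show (334:ℕ) = 167 + 167 from rfl, pow_add]; norm_num)
  · norm_num

lemma case13 (n : ℕ) (hn : n = 13) :
    θ (n+1) ^ ((1:ℝ)/(n+1)) < θ n ^ ((1:ℝ)/n) := by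
  subst hn
  rw [show (13:ℕ)+1 = 14 from rfl, tv13, tv14]
  apply bridge 13 (by norm_num) _ _ ((333:ℝ)/10) ((372:ℝ)/10)
  · norm_num
  · norm_num
  · exact_mod_cast logP_ge 304250263527210 333 (by norm_num) (by rw [show (333:ℕ) = 166 + 167 from rfl, pow_add]; norm_num)
  · exact Real.log_nonneg (by norm_num)
  · exact_mod_cast logP_le 13082761331670030 372 (by norm_num) (by rw [show (372:ℕ) = 186 + 186 from rfl, pow_add]; norm_num)
  · norm_num

lemma case14 (n : ℕ) (hn : n = 14) :
    θ (n+1) ^ ((1:ℝ)/(n+1)) < θ n ^ ((1:ℝ)/n) := by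
  subst hn
  rw [show (14:ℕ)+1 = 15 from rfl, tv14, tv15]
  apply bridge 14 (by norm_num) _ _ ((371:ℝ)/10) ((410:ℝ)/10)
  · norm_num
  · norm_num
  · exact_mod_cast logP_ge 13082761331670030 371 (by norm_num) (by rw [show (371:ℕ) = 185 + 186 from rfl, pow_add]; norm_num)
  · exact Real.log_nonneg (by norm_num)
  · exact_mod_cast logP_le 614889782588491410 410 (by norm_num) (by rw [show (410:ℕ) = 205 + 205 from rfl, pow_add]; norm_num)
  · norm_num

lemma case15 (n : ℕ) (hn : n = 15) :
    θ (n+1) ^ ((1:ℝ)/(n+1)) < θ n ^ ((1:ℝ)/n) := by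
  subst hn
  rw [show (15:ℕ)+1 = 16 from rfl, tv15, tv16]
  apply bridge 15 (by norm_num) _ _ ((409:ℝ)/10) ((450:ℝ)/10)
  · norm_num
  · norm_num
  · exact_mod_cast logP_ge 614889782588491410 409 (by norm_num) (by rw [show (409:ℕ) = 204 + 205 from rfl, pow_add]; norm_num)
  · exact Real.log_nonneg (by norm_num)
  · exact_mod_cast logP_le 32589158477190044730 450 (by norm_num) (by rw [show (450:ℕ) = 225 + 225 from rfl, pow_add]; norm_num)
  · norm_num

lemma case16 (n : ℕ) (hn : n = 16) :
    θ (n+1) ^ ((1:ℝ)/(n+1)) < θ n ^ ((1:ℝ)/n) := by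
  subst hn
  rw [show (16:ℕ)+1 = 17 from rfl, tv16, tv17]
  apply bridge 16 (by norm_num) _ _ ((449:ℝ)/10) ((491:ℝ)/10)
  · norm_num
  · norm_num
  · exact_mod_cast logP_ge 32589158477190044730 449 (by norm_num) (by rw [show (449:ℕ) = 224 + 225 from rfl, pow_add]; norm_num)
  · exact Real.log_nonneg (by norm_num)
  · exact_mod_cast logP_le 1922760350154212639070 491 (by norm_num) (by rw [show (491:ℕ) = 245 + 246 from rfl, pow_add]; norm_num)
  · norm_num

lemma case17 (n : ℕ) (hn : n = 17) :
    θ (n+1) ^ ((1:ℝ)/(n+1)) < θ n ^ ((1:ℝ)/n) := by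
  subst hn
  rw [show (17:ℕ)+1 = 18 from rfl, tv17, tv18]
  apply bridge 17 (by norm_num) _ _ ((490:ℝ)/10) ((532:ℝ)/10)
  · norm_num
  · norm_num
  · exact_mod_cast logP_ge 1922760350154212639070 490 (by norm_num) (by rw [show (490:ℕ) = 245 + 245 from rfl, pow_add]; norm_num)
  · exact Real.log_nonneg (by norm_num)
  · exact_mod_cast logP_le 117288381359406970983270 532 (by norm_num) (by rw [show (532:ℕ) = 177 + 177 + 178 from rfl, pow_add, pow_add]; norm_num)
  · norm_num

lemma case18 (n : ℕ) (hn : n = 18) :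
    θ (n+1) ^ ((1:ℝ)/(n+1)) < θ n ^ ((1:ℝ)/n) := by
  subst hn
  rw [show (18:ℕ)+1 = 19 from rfl, tv18, tv19]
  apply bridge 18 (by norm_num) _ _ ((531:ℝ)/10) ((574:ℝ)/10)
  · norm_num
  · norm_num
  · exact_mod_cast logP_ge 117288381359406970983270 531 (by norm_num) (by rw [show (531:ℕ) = 177 + 177 + 177 from rfl, pow_add, pow_add]; norm_num)
  · exact Real.log_nonneg (by norm_num)
  · exact_mod_cast logP_le 7858321551080267055879090 574 (by norm_num) (by rw [show (574:ℕ) = 191 + 191 + 192 from rfl, pow_add, pow_add]; norm_num)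
  · norm_num

lemma case19 (n : ℕ) (hn : n = 19) :
    θ (n+1) ^ ((1:ℝ)/(n+1)) < θ n ^ ((1:ℝ)/n) := by
  subst hn
  rw [show (19:ℕ)+1 = 20 from rfl, tv19, tv20]
  apply bridge 19 (by norm_num) _ _ ((573:ℝ)/10) ((616:ℝ)/10)
  · norm_num
  · norm_num
  · exact_mod_cast logP_ge 7858321551080267055879090 573 (by norm_num) (by rw [show (573:ℕ) = 191 + 191 + 191 from rfl, pow_add, pow_add]; norm_num)
  · exact Real.log_nonneg (by norm_num)
  · exact_mod_cast logP_le 557940830126698960967415390 616 (by norm_num) (by rw [show (616:ℕ) = 205 + 205 + 206 from rfl, pow_add, pow_add]; norm_num)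
  · norm_num

lemma sq_le_two_pow (m : ℕ) (hm : 7 ≤ m) : m^2 ≤ 2^(m-1) := by
  obtain ⟨k, rfl⟩ : ∃ k, m = k + 7 := ⟨m - 7, by omega⟩
  clear hm
  induction k with
  | zero => norm_num
  | succ k ih =>
    have h1 : (k+1+7)^2 = (k+7)^2 + (2*k+15) := by ring
    have h2 : 2*k+15 ≤ (k+7)^2 := by nlinarith
    have h3 : k+1+7-1 = (k+7-1)+1 := by omega
    calc (k+1+7)^2 ≤ 2 * (k+7)^2 := by omega
      _ ≤ 2 * 2^(k+7-1) := by omega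
      _ = 2^(k+1+7-1) := by rw [h3]; ring

lemma cb_le (n : ℕ) (hn : 0 < n) :
    Nat.centralBinom n ≤ (2*n) ^ (Nat.count Nat.Prime (2*n+1)) := by
  rw [← Nat.prod_pow_factorization_centralBinom n, Nat.count_eq_card_filter_range]
  have h1 : ∏ x ∈ Finset.range (2*n+1), x ^ (Nat.centralBinom n).factorization x
      = ∏ x ∈ (Finset.range (2*n+1)).filter Nat.Prime,
          x ^ (Nat.centralBinom n).factorization x := by
    symm
    apply Finset.prod_filter_of_ne
    intro x _ hx
    by_contra hnp
    rw [Nat.factorization_eq_zero_of_not_prime _ hnp, pow_zero] at hx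
    exact hx rfl
  rw [h1]
  calc ∏ x ∈ (Finset.range (2*n+1)).filter Nat.Prime,
          x ^ (Nat.centralBinom n).factorization x
      ≤ ∏ _x ∈ (Finset.range (2*n+1)).filter Nat.Prime, (2*n) := by
        apply Finset.prod_le_prod' 
        intro i _
        exact Nat.pow_factorization_choose_le (by omega)
    _ = (2*n) ^ ((Finset.range (2*n+1)).filter Nat.Prime).card := Finset.prod_const _
    _ = _ := rfl

lemma p_le_sq (m : ℕ) (hm : 7 ≤ m) : p m ≤ m^2 := by
  suffices h : m ≤ Nat.count Nat.Prime (m^2+1) by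
    have h2 : m - 1 < Nat.count Nat.Prime (m^2+1) := by omega
    have := Nat.nth_lt_of_lt_count h2
    unfold p; omega
  set n := m^2/2 with hn
  have hn4 : 4 ≤ n := by
    have : 49 ≤ m^2 := by nlinarith
    omega
  by_contra hlt
  push_neg at hlt
  have hk : Nat.count Nat.Prime (2*n+1) + 1 ≤ m := by
    have := Nat.count_monotone Nat.Prime (show 2*n+1 ≤ m^2+1 by omega)
    omega
  have H1 : 4^n < n * Nat.centralBinom n := Nat.four_pow_lt_mul_centralBinom n hn4
  have H2 : Nat.centralBinom n ≤ (2*n) ^ (Nat.count Nat.Prime (2*n+1)) :=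
    cb_le n (by omega)
  have H3 : 4^n < (2*n) ^ (Nat.count Nat.Prime (2*n+1) + 1) := by
    calc 4^n < n * Nat.centralBinom n := H1
      _ ≤ n * (2*n) ^ (Nat.count Nat.Prime (2*n+1)) := Nat.mul_le_mul_left n H2
      _ ≤ (2*n) * (2*n) ^ (Nat.count Nat.Prime (2*n+1)) := by
          apply Nat.mul_le_mul_right; omega
      _ = (2*n) ^ (Nat.count Nat.Prime (2*n+1) + 1) := by ring
  have H4 : (2*n) ^ (Nat.count Nat.Prime (2*n+1) + 1) ≤ (2*n)^m :=
    Nat.pow_le_pow_right (by omega) hk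
  have H5 : (2*n)^m ≤ (m^2)^m := Nat.pow_le_pow_left (by omega) m
  have H6 : (m^2)^m ≤ (2^(m-1))^m := Nat.pow_le_pow_left (sq_le_two_pow m hm) m
  have H7 : (2:ℕ)^(m^2-1) ≤ 4^n := by
    have : (4:ℕ)^n = 2^(2*n) := by rw [show (4:ℕ) = 2^2 from rfl, ← pow_mul]
    rw [this]
    apply Nat.pow_le_pow_right (by omega)
    omega
  have H8 : (2:ℕ)^(m^2-1) < 2^((m-1)*m) := by
    calc (2:ℕ)^(m^2-1) ≤ 4^n := H7
      _ < (2^(m-1))^m := lt_of_lt_of_le (lt_of_lt_of_le H3 H4) (le_trans H5 H6)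
      _ = 2^((m-1)*m) := by rw [← pow_mul]
  have := (Nat.pow_lt_pow_iff_right (by omega : 1 < 2)).mp H8
  have hmm : (m-1)*m = m^2 - m := by
    rw [Nat.sub_mul, one_mul, ← pow_two]
  have hsq : 49 ≤ m^2 := by nlinarith
  omega
lemma asympt (n : ℕ) (hn : 20 ≤ n) :
    θ (n+1) ^ ((1:ℝ)/(n+1)) < θ n ^ ((1:ℝ)/n) := by
  have hm : 21 ≤ n+1 := by omega
  have hlog21 : (3:ℝ) < Real.log 21 := by
    rw [Real.lt_log_iff_exp_lt (by norm_num)]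
    have h1 : Real.exp (3:ℝ) = Real.exp 1 ^ (3:ℕ) := by rw [exp_pow_eq]; norm_num
    calc Real.exp (3:ℝ) = Real.exp 1 ^ (3:ℕ) := h1
      _ < 2.7182818286 ^ (3:ℕ) := by
          apply pow_lt_pow_left₀ Real.exp_one_lt_d9 (Real.exp_pos 1).le
          norm_num
      _ < 21 := by norm_num
  have hmR : (21:ℝ) ≤ (n:ℝ)+1 := by exact_mod_cast hm
  have hlogm : (3:ℝ) < Real.log ((n:ℝ)+1) :=
    lt_of_lt_of_le hlog21 (Real.log_le_log (by norm_num) hmR)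
  have hfact : ((n:ℝ)+1) * (Real.log ((n:ℝ)+1) - 1) ≤ Real.log (Nat.factorial (n+1) : ℝ) := by
    have := logfact_ge (n+1) (by omega)
    push_cast at this
    exact this
  have hθ : ((n:ℝ)+1) * (Real.log ((n:ℝ)+1) - 1) ≤ θ n := le_trans hfact (theta_ge n)
  have hm_le_θ : (n:ℝ)+1 ≤ θ n := by nlinarith
  have hθ1 : (1:ℝ) < θ n := by linarith
  have hp : (p (n+1) : ℝ) ≤ ((n:ℝ)+1)^2 := by
    have := p_le_sq (n+1) (by omega)
    have h2 : ((p (n+1) : ℕ) : ℝ) ≤ (((n+1)^2 : ℕ) : ℝ) := by exact_mod_cast this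
    push_cast at h2
    exact h2
  have hp2 : (2:ℝ) ≤ (p (n+1):ℝ) := by exact_mod_cast p_ge_two (n+1)
  have hL0 : 0 < Real.log (p (n+1)) := Real.log_pos (by linarith)
  have hL2 : Real.log (p (n+1)) ≤ 2 * Real.log ((n:ℝ)+1) := by
    calc Real.log (p (n+1)) ≤ Real.log (((n:ℝ)+1)^2) := Real.log_le_log (by linarith) hp
      _ = 2 * Real.log ((n:ℝ)+1) := by rw [Real.log_pow]; norm_num
  have hlogθ : Real.log ((n:ℝ)+1) ≤ Real.log (θ n) := Real.log_le_log (by linarith) hm_le_θ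
  have hlogθ0 : 0 < Real.log (θ n) := lt_of_lt_of_le (by linarith) hlogθ
  rw [θ_succ]
  apply main_real n (by omega) _ _ hθ1 hL0
  have hn0 : (0:ℝ) ≤ (n:ℝ) := by positivity
  calc (n:ℝ) * Real.log (p (n+1)) ≤ (n:ℝ) * (2*Real.log ((n:ℝ)+1)) :=
        mul_le_mul_of_nonneg_left hL2 hn0
    _ < ((n:ℝ)+1) * (2*Real.log ((n:ℝ)+1)) := by nlinarith
    _ ≤ (((n:ℝ)+1)*(Real.log ((n:ℝ)+1) - 1)) * Real.log ((n:ℝ)+1) := by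
        nlinarith [mul_nonneg (mul_nonneg (by linarith : (0:ℝ) ≤ (n:ℝ)+1)
          (by linarith : (0:ℝ) ≤ Real.log ((n:ℝ)+1)))
          (by linarith : (0:ℝ) ≤ Real.log ((n:ℝ)+1) - 3)]
    _ ≤ θ n * Real.log (θ n) := by
        apply mul_le_mul hθ hlogθ (by linarith) (by linarith)

theorem stmt18 : ∀ n : ℕ, 4 ≤ n →
    θ (n+1) ^ ((1 : ℝ)/(n+1)) < θ n ^ ((1 : ℝ)/n) := by
  intro n hn
  rcases lt_or_ge n 20 with h | h
  · interval_cases n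
    · exact case4 _ rfl
    · exact case5 _ rfl
    · exact case6 _ rfl
    · exact case7 _ rfl
    · exact case8 _ rfl
    · exact case9 _ rfl
    · exact case10 _ rfl
    · exact case11 _ rfl
    · exact case12 _ rfl
    · exact case13 _ rfl
    · exact case14 _ rfl
    · exact case15 _ rfl
    · exact case16 _ rfl
    · exact case17 _ rfl
    · exact case18 _ rfl
    · exact case19 _ rfl
  · exact asympt n h
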